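/- Let A ∈ ℝ^{d1×d2×d3}, let B^{(1)} be the d1 × d1 matrix with entries b_{ij} = ∑_{k,l} a_{ikl} a_{jkl}, and let L = max_j max{ ∑_{i,p} (∑_k a_{ijk} a_{pjk}) x_i x_p : ‖x‖ = 1 }. Then (1/d2) ρ(B^{(1)}) ≤ L ≤ ‖A‖² ≤ ρ(B^{(1)}) ≤ d2 · L. -/
import Mathlib

noncomputable section

/-- The spectral norm of a third order tensor. -/
noncomputable def specA {d1 d2 d3 : ℕ} (A : Fin d1 → Fin d2 → Fin d3 → ℝ) : ℝ :=
  sSup { r : ℝ | ∃ x : Fin d1 → ℝ, ∃ y : Fin d2 → ℝ, ∃ z : Fin d3 → ℝ,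
    (∑ i, x i ^ 2 = 1) ∧ (∑ j, y j ^ 2 = 1) ∧ (∑ k, z k ^ 2 = 1) ∧
    r = ∑ i, ∑ j, ∑ k, A i j k * x i * y j * z k }

/-- Spectral radius of a symmetric matrix, as the maximum of `|sᵀ M s|` over unit vectors. -/
noncomputable def raySup {n : Type*} [Fintype n] (M : Matrix n n ℝ) : ℝ :=
  sSup { r : ℝ | ∃ s : n → ℝ, (∑ i, s i ^ 2 = 1) ∧ r = |∑ i, ∑ j, M i j * s i * s j| }

/-- Contraction of `A` with itself on the second and third indices. -/
def B1 {d1 d2 d3 : ℕ} (A : Fin d1 → Fin d2 → Fin d3 → ℝ) : Matrix (Fin d1) (Fin d1) ℝ :=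
  Matrix.of fun i j => ∑ k, ∑ l, A i k l * A j k l

open Finset

private lemma unit_abs_le {d : ℕ} {x : Fin d → ℝ} (hx : ∑ i, x i ^ 2 = 1) (i : Fin d) :
    |x i| ≤ 1 := by
  have h1 : x i ^ 2 ≤ 1 := hx ▸ Finset.single_le_sum (fun j _ => sq_nonneg (x j)) (Finset.mem_univ i)
  nlinarith [abs_nonneg (x i), sq_abs (x i)]

private lemma quad_eq {d1 d2 d3 : ℕ} (A : Fin d1 → Fin d2 → Fin d3 → ℝ) (j : Fin d2)
    (x : Fin d1 → ℝ) :
    ∑ i, ∑ p, (∑ k, A i j k * A p j k) * x i * x p = ∑ k, (∑ i, A i j k * x i) ^ 2 := by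
  calc ∑ i, ∑ p, (∑ k, A i j k * A p j k) * x i * x p
      = ∑ i, ∑ k, ∑ p, (A i j k * x i) * (A p j k * x p) := by
        refine Finset.sum_congr rfl fun i _ => ?_
        rw [Finset.sum_comm]
        refine Finset.sum_congr rfl fun p _ => ?_
        rw [Finset.sum_mul, Finset.sum_mul]
        exact Finset.sum_congr rfl fun k _ => by ring
    _ = ∑ k, ∑ i, ∑ p, (A i j k * x i) * (A p j k * x p) := Finset.sum_comm
    _ = ∑ k, (∑ i, A i j k * x i) ^ 2 := by
        refine Finset.sum_congr rfl fun k _ => ?_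
        rw [sq, Finset.sum_mul_sum]

private lemma B1_quad {d1 d2 d3 : ℕ} (A : Fin d1 → Fin d2 → Fin d3 → ℝ) (x : Fin d1 → ℝ) :
    ∑ i, ∑ p, B1 A i p * x i * x p
      = ∑ j, ∑ i, ∑ p, (∑ k, A i j k * A p j k) * x i * x p := by
  calc ∑ i, ∑ p, B1 A i p * x i * x p
      = ∑ i, ∑ j, ∑ p, (∑ k, A i j k * A p j k) * x i * x p := by
        refine Finset.sum_congr rfl fun i _ => ?_
        rw [Finset.sum_comm]
        refine Finset.sum_congr rfl fun p _ => ?_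
        show (∑ j, ∑ k, A i j k * A p j k) * x i * x p = _
        rw [Finset.sum_mul, Finset.sum_mul]
    _ = ∑ j, ∑ i, ∑ p, (∑ k, A i j k * A p j k) * x i * x p := Finset.sum_comm

private lemma quad_bound {d : ℕ} (M : Fin d → Fin d → ℝ) {x : Fin d → ℝ}
    (hx : ∑ i, x i ^ 2 = 1) :
    |∑ i, ∑ p, M i p * x i * x p| ≤ ∑ i, ∑ p, |M i p| := by
  calc |∑ i, ∑ p, M i p * x i * x p| ≤ ∑ i, |∑ p, M i p * x i * x p| :=
        Finset.abs_sum_le_sum_abs _ _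
    _ ≤ ∑ i, ∑ p, |M i p * x i * x p| :=
        Finset.sum_le_sum fun i _ => Finset.abs_sum_le_sum_abs _ _
    _ ≤ ∑ i, ∑ p, |M i p| := by
        refine Finset.sum_le_sum fun i _ => Finset.sum_le_sum fun p _ => ?_
        rw [abs_mul, abs_mul]
        calc |M i p| * |x i| * |x p| ≤ |M i p| * 1 * 1 := by
              gcongr
              · exact unit_abs_le hx i
              · exact unit_abs_le hx p
          _ = |M i p| := by ring

private lemma raySup_bdd {d : ℕ} (M : Matrix (Fin d) (Fin d) ℝ) :
    BddAbove { r : ℝ | ∃ s : Fin d → ℝ, (∑ i, s i ^ 2 = 1) ∧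
      r = |∑ i, ∑ j, M i j * s i * s j| } := by
  refine ⟨∑ i, ∑ p, |M i p|, ?_⟩
  rintro r ⟨s, hs, rfl⟩
  exact quad_bound _ hs

private lemma raySup_nonneg' {d : ℕ} (M : Matrix (Fin d) (Fin d) ℝ) : 0 ≤ raySup M :=
  Real.sSup_nonneg (by rintro r ⟨s, hs, rfl⟩; exact abs_nonneg _)

private lemma specA_bdd {d1 d2 d3 : ℕ} (A : Fin d1 → Fin d2 → Fin d3 → ℝ) :
    BddAbove { r : ℝ | ∃ x : Fin d1 → ℝ, ∃ y : Fin d2 → ℝ, ∃ z : Fin d3 → ℝ,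
      (∑ i, x i ^ 2 = 1) ∧ (∑ j, y j ^ 2 = 1) ∧ (∑ k, z k ^ 2 = 1) ∧
      r = ∑ i, ∑ j, ∑ k, A i j k * x i * y j * z k } := by
  refine ⟨∑ i, ∑ j, ∑ k, |A i j k|, ?_⟩
  rintro r ⟨x, y, z, hx, hy, hz, rfl⟩
  calc (∑ i, ∑ j, ∑ k, A i j k * x i * y j * z k)
      ≤ |∑ i, ∑ j, ∑ k, A i j k * x i * y j * z k| := le_abs_self _
    _ ≤ ∑ i, |∑ j, ∑ k, A i j k * x i * y j * z k| := Finset.abs_sum_le_sum_abs _ _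
    _ ≤ ∑ i, ∑ j, |∑ k, A i j k * x i * y j * z k| :=
        Finset.sum_le_sum fun i _ => Finset.abs_sum_le_sum_abs _ _
    _ ≤ ∑ i, ∑ j, ∑ k, |A i j k * x i * y j * z k| :=
        Finset.sum_le_sum fun i _ => Finset.sum_le_sum fun j _ => Finset.abs_sum_le_sum_abs _ _
    _ ≤ ∑ i, ∑ j, ∑ k, |A i j k| := by
        refine Finset.sum_le_sum fun i _ => Finset.sum_le_sum fun j _ =>
          Finset.sum_le_sum fun k _ => ?_
        rw [abs_mul, abs_mul, abs_mul]
        calc |A i j k| * |x i| * |y j| * |z k| ≤ |A i j k| * 1 * 1 * 1 := by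
              gcongr
              · exact unit_abs_le hx i
              · exact unit_abs_le hy j
              · exact unit_abs_le hz k
          _ = |A i j k| := by ring

private lemma le_specA {d1 d2 d3 : ℕ} (A : Fin d1 → Fin d2 → Fin d3 → ℝ) {r : ℝ}
    (hr : r ∈ { r : ℝ | ∃ x : Fin d1 → ℝ, ∃ y : Fin d2 → ℝ, ∃ z : Fin d3 → ℝ,
      (∑ i, x i ^ 2 = 1) ∧ (∑ j, y j ^ 2 = 1) ∧ (∑ k, z k ^ 2 = 1) ∧
      r = ∑ i, ∑ j, ∑ k, A i j k * x i * y j * z k }) : r ≤ specA A :=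
  le_csSup (specA_bdd A) hr

private lemma specA_nonneg {d1 d2 d3 : ℕ} (A : Fin d1 → Fin d2 → Fin d3 → ℝ) :
    0 ≤ specA A := by
  rcases Set.eq_empty_or_nonempty { r : ℝ | ∃ x : Fin d1 → ℝ, ∃ y : Fin d2 → ℝ, ∃ z : Fin d3 → ℝ,
      (∑ i, x i ^ 2 = 1) ∧ (∑ j, y j ^ 2 = 1) ∧ (∑ k, z k ^ 2 = 1) ∧
      r = ∑ i, ∑ j, ∑ k, A i j k * x i * y j * z k } with he | hne
  · unfold specA
    rw [he, Real.sSup_empty]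
  · obtain ⟨r, x, y, z, hx, hy, hz, hr⟩ := hne
    have h1 : r ≤ specA A := le_specA A ⟨x, y, z, hx, hy, hz, hr⟩
    have h2 : -r ≤ specA A := by
      refine le_specA A ⟨fun i => -x i, y, z, ?_, hy, hz, ?_⟩
      · simpa using hx
      · rw [hr]
        rw [← Finset.sum_neg_distrib]
        refine Finset.sum_congr rfl fun i _ => ?_
        rw [← Finset.sum_neg_distrib]
        refine Finset.sum_congr rfl fun j _ => ?_
        rw [← Finset.sum_neg_distrib]
        exact Finset.sum_congr rfl fun k _ => by ring
    linarith

theorem stmt18 {d1 d2 d3 : ℕ} (A : Fin d1 → Fin d2 → Fin d3 → ℝ)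
    (L : ℝ)
    (hL : L = sSup { r : ℝ | ∃ j : Fin d2,
      r = sSup { t : ℝ | ∃ x : Fin d1 → ℝ, (∑ i, x i ^ 2 = 1) ∧
        t = ∑ i, ∑ p, (∑ k, A i j k * A p j k) * x i * x p } }) :
    (1 / (d2 : ℝ)) * raySup (B1 A) ≤ L ∧ L ≤ specA A ^ 2 ∧
      specA A ^ 2 ≤ raySup (B1 A) ∧ raySup (B1 A) ≤ (d2 : ℝ) * L := by
  classical
  set f : Fin d2 → ℝ := fun j => sSup { t : ℝ | ∃ x : Fin d1 → ℝ, (∑ i, x i ^ 2 = 1) ∧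
      t = ∑ i, ∑ p, (∑ k, A i j k * A p j k) * x i * x p } with hf
  have hLr : L = sSup (Set.range f) := by
    rw [hL]
    congr 1
    ext r
    constructor
    · rintro ⟨j, h⟩; exact ⟨j, h.symm⟩
    · rintro ⟨j, h⟩; exact ⟨j, h.symm⟩
  have hinnerBdd : ∀ j : Fin d2, BddAbove { t : ℝ | ∃ x : Fin d1 → ℝ, (∑ i, x i ^ 2 = 1) ∧
      t = ∑ i, ∑ p, (∑ k, A i j k * A p j k) * x i * x p } := by
    intro j
    refine ⟨∑ i, ∑ p, |∑ k, A i j k * A p j k|, ?_⟩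
    rintro t ⟨x, hx, rfl⟩
    exact (le_abs_self _).trans (quad_bound (fun i p => ∑ k, A i j k * A p j k) hx)
  have hfnn : ∀ j : Fin d2, 0 ≤ f j := by
    intro j
    refine Real.sSup_nonneg ?_
    rintro t ⟨x, hx, rfl⟩
    rw [quad_eq]
    positivity
  have hLnn : 0 ≤ L := by
    rw [hLr]
    refine Real.sSup_nonneg ?_
    rintro r ⟨j, rfl⟩
    exact hfnn j
  have hfL : ∀ j : Fin d2, f j ≤ L := by
    intro j
    rw [hLr]
    exact le_csSup (Set.finite_range f).bddAbove ⟨j, rfl⟩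
  have ht_le_f : ∀ (j : Fin d2) (x : Fin d1 → ℝ), (∑ i, x i ^ 2 = 1) →
      (∑ i, ∑ p, (∑ k, A i j k * A p j k) * x i * x p) ≤ f j := by
    intro j x hx
    exact le_csSup (hinnerBdd j) ⟨x, hx, rfl⟩
  -- inequality 4
  have h4 : raySup (B1 A) ≤ (d2 : ℝ) * L := by
    refine Real.sSup_le ?_ (mul_nonneg (Nat.cast_nonneg d2) hLnn)
    rintro r ⟨s, hs, rfl⟩
    have hnn : ∀ j : Fin d2, 0 ≤ ∑ i, ∑ p, (∑ k, A i j k * A p j k) * s i * s p := by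
      intro j; rw [quad_eq]; positivity
    have habs : |∑ i, ∑ j, B1 A i j * s i * s j|
        = ∑ j, ∑ i, ∑ p, (∑ k, A i j k * A p j k) * s i * s p := by
      rw [B1_quad A s, abs_of_nonneg (Finset.sum_nonneg fun j _ => hnn j)]
    rw [habs]
    calc ∑ j, ∑ i, ∑ p, (∑ k, A i j k * A p j k) * s i * s p
        ≤ ∑ _j : Fin d2, L := Finset.sum_le_sum fun j _ => (ht_le_f j s hs).trans (hfL j)
      _ = (d2 : ℝ) * L := by simp [Finset.sum_const, Finset.card_fin, nsmul_eq_mul]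
  -- inequality 1
  have h1 : (1 / (d2 : ℝ)) * raySup (B1 A) ≤ L := by
    rcases Nat.eq_zero_or_pos d2 with h0 | hpos
    · subst h0
      simpa using hLnn
    · have hd2 : (0 : ℝ) < d2 := by exact_mod_cast hpos
      rw [div_mul_eq_mul_div, one_mul, div_le_iff₀ hd2]
      calc raySup (B1 A) ≤ (d2 : ℝ) * L := h4
        _ = L * d2 := by ring
  -- inequality 2
  have h2 : L ≤ specA A ^ 2 := by
    rw [hLr]
    refine Real.sSup_le ?_ (sq_nonneg _)
    rintro r ⟨j, rfl⟩
    refine Real.sSup_le ?_ (sq_nonneg _)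
    rintro t ⟨x, hx, rfl⟩
    rw [quad_eq]
    rcases eq_or_lt_of_le (show (0:ℝ) ≤ ∑ k, (∑ i, A i j k * x i) ^ 2 by positivity)
      with hzero | hpos
    · rw [← hzero]; exact sq_nonneg _
    · set n := Real.sqrt (∑ k, (∑ i, A i j k * x i) ^ 2) with hn
      have hn2 : n ^ 2 = ∑ k, (∑ i, A i j k * x i) ^ 2 := Real.sq_sqrt hpos.le
      have hnpos : 0 < n := Real.sqrt_pos.mpr hpos
      set z : Fin d3 → ℝ := fun k => (∑ i, A i j k * x i) / n with hzdef
      have hz : ∑ k, z k ^ 2 = 1 := by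
        simp only [hzdef, div_pow]
        rw [← Finset.sum_div, ← hn2]
        field_simp
      set y : Fin d2 → ℝ := fun j' => if j' = j then 1 else 0 with hydef
      have hy : ∑ j', y j' ^ 2 = 1 := by simp [hydef]
      have hval : (∑ i, ∑ j', ∑ k, A i j' k * x i * y j' * z k) = n := by
        have e1 : ∀ i : Fin d1, (∑ j', ∑ k, A i j' k * x i * y j' * z k)
            = ∑ k, A i j k * x i * z k := by
          intro i
          rw [Finset.sum_comm]
          refine Finset.sum_congr rfl fun k _ => ?_
          simp [hydef, mul_ite, ite_mul, Finset.sum_ite_eq']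
        calc (∑ i, ∑ j', ∑ k, A i j' k * x i * y j' * z k)
            = ∑ i, ∑ k, A i j k * x i * z k := Finset.sum_congr rfl fun i _ => e1 i
          _ = ∑ k, (∑ i, A i j k * x i) * z k := by
              rw [Finset.sum_comm]
              exact Finset.sum_congr rfl fun k _ => (Finset.sum_mul _ _ _).symm
          _ = (∑ k, (∑ i, A i j k * x i) ^ 2) / n := by
              rw [Finset.sum_div]
              refine Finset.sum_congr rfl fun k _ => ?_
              simp only [hzdef]
              ring
          _ = n := by rw [← hn2, sq, mul_div_assoc, div_self hnpos.ne', mul_one]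
      have hmem : n ≤ specA A := le_specA A ⟨x, y, z, hx, hy, hz, hval.symm⟩
      calc ∑ k, (∑ i, A i j k * x i) ^ 2 = n ^ 2 := hn2.symm
        _ ≤ specA A ^ 2 := pow_le_pow_left₀ hnpos.le hmem 2
  -- inequality 3
  have h3 : specA A ^ 2 ≤ raySup (B1 A) := by
    have hray_nn : 0 ≤ raySup (B1 A) := raySup_nonneg' _
    have key : specA A ≤ Real.sqrt (raySup (B1 A)) := by
      refine Real.sSup_le ?_ (Real.sqrt_nonneg _)
      rintro r ⟨x, y, z, hx, hy, hz, rfl⟩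
      have hrearr : (∑ i, ∑ j, ∑ k, A i j k * x i * y j * z k)
          = ∑ j, y j * (∑ k, (∑ i, A i j k * x i) * z k) := by
        rw [Finset.sum_comm]
        refine Finset.sum_congr rfl fun j _ => ?_
        calc (∑ i, ∑ k, A i j k * x i * y j * z k)
            = ∑ k, ∑ i, A i j k * x i * y j * z k := Finset.sum_comm
          _ = ∑ k, (∑ i, A i j k * x i) * (y j * z k) := by
              refine Finset.sum_congr rfl fun k _ => ?_
              rw [Finset.sum_mul]
              exact Finset.sum_congr rfl fun i _ => by ring
          _ = y j * ∑ k, (∑ i, A i j k * x i) * z k := by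
              rw [Finset.mul_sum]
              exact Finset.sum_congr rfl fun k _ => by ring
      have hcs1 : (∑ i, ∑ j, ∑ k, A i j k * x i * y j * z k) ^ 2
          ≤ ∑ j, (∑ k, (∑ i, A i j k * x i) * z k) ^ 2 := by
        rw [hrearr]
        calc (∑ j, y j * (∑ k, (∑ i, A i j k * x i) * z k)) ^ 2
            ≤ (∑ j, y j ^ 2) * ∑ j, (∑ k, (∑ i, A i j k * x i) * z k) ^ 2 :=
              Finset.sum_mul_sq_le_sq_mul_sq _ _ _
          _ = ∑ j, (∑ k, (∑ i, A i j k * x i) * z k) ^ 2 := by rw [hy, one_mul]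
      have hcs2 : ∀ j : Fin d2, (∑ k, (∑ i, A i j k * x i) * z k) ^ 2
          ≤ ∑ k, (∑ i, A i j k * x i) ^ 2 := by
        intro j
        calc (∑ k, (∑ i, A i j k * x i) * z k) ^ 2
            ≤ (∑ k, (∑ i, A i j k * x i) ^ 2) * ∑ k, z k ^ 2 :=
              Finset.sum_mul_sq_le_sq_mul_sq _ _ _
          _ = ∑ k, (∑ i, A i j k * x i) ^ 2 := by rw [hz, mul_one]
      have hquad : (∑ i, ∑ j, ∑ k, A i j k * x i * y j * z k) ^ 2
          ≤ |∑ i, ∑ p, B1 A i p * x i * x p| := by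
        calc (∑ i, ∑ j, ∑ k, A i j k * x i * y j * z k) ^ 2
            ≤ ∑ j, (∑ k, (∑ i, A i j k * x i) * z k) ^ 2 := hcs1
          _ ≤ ∑ j, ∑ k, (∑ i, A i j k * x i) ^ 2 := Finset.sum_le_sum fun j _ => hcs2 j
          _ = ∑ i, ∑ p, B1 A i p * x i * x p := by
              rw [B1_quad A x]
              exact (Finset.sum_congr rfl fun j _ => quad_eq A j x).symm
          _ ≤ |∑ i, ∑ p, B1 A i p * x i * x p| := le_abs_self _
      have hray : |∑ i, ∑ p, B1 A i p * x i * x p| ≤ raySup (B1 A) :=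
        le_csSup (raySup_bdd (B1 A)) ⟨x, hx, rfl⟩
      calc (∑ i, ∑ j, ∑ k, A i j k * x i * y j * z k)
          ≤ |∑ i, ∑ j, ∑ k, A i j k * x i * y j * z k| := le_abs_self _
        _ = Real.sqrt ((∑ i, ∑ j, ∑ k, A i j k * x i * y j * z k) ^ 2) :=
            (Real.sqrt_sq_eq_abs _).symm
        _ ≤ Real.sqrt (raySup (B1 A)) := Real.sqrt_le_sqrt (hquad.trans hray)
    calc specA A ^ 2 ≤ Real.sqrt (raySup (B1 A)) ^ 2 :=
          pow_le_pow_left₀ (specA_nonneg A) key 2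
      _ = raySup (B1 A) := Real.sq_sqrt hray_nn
  exact ⟨h1, h2, h3, h4⟩
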